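/- Let n ≥ 1 and let r : ℂ³ → Mat_n(ℂ) ⊗ Mat_n(ℂ), written (v,y₁,y₂) ↦ r(v;y₁,y₂), satisfy for all u,v,y₁,y₂,y₃ ∈ ℂ the associative Yang–Baxter equation r(u;y₁,y₂)^{12} · r(u+v;y₂,y₃)^{23} = r(u+v;y₁,y₃)^{13} · r(−v;y₁,y₂)^{12} + r(v;y₂,y₃)^{23} · r(u;y₁,y₃)^{13}, together with the unitarity condition r(v;y₁,y₂) = −τ(r(−v;y₂,y₁)). Then for all u,v,y₁,y₂,y₃ ∈ ℂ the following commutator identity holds in Mat_n(ℂ)^{⊗3}: [r(−v;y₁,y₂)^{12}, r(u+v;y₁,y₃)^{13}] + [r(u;y₁,y₂)^{12}, r(u+v;y₂,y₃)^{23}] + [r(u;y₁,y₃)^{13}, r(v;y₂,y₃)^{23}] = 0. -/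

import Mathlib

set_option maxHeartbeats 1000000
set_option synthInstance.maxHeartbeats 1000000

open scoped TensorProduct

/-- `Mat_n(ℂ)`, the algebra of complex `n × n` matrices. -/
abbrev MatC (n : ℕ) : Type := Matrix (Fin n) (Fin n) ℂ

/-- `r = Σ aᵢ ⊗ bᵢ ↦ r¹² = Σ aᵢ ⊗ bᵢ ⊗ 1` in `Mat_n(ℂ)^{⊗3}`. -/
noncomputable def leg12 (n : ℕ) :
    (MatC n ⊗[ℂ] MatC n) →ₐ[ℂ] (MatC n ⊗[ℂ] (MatC n ⊗[ℂ] MatC n)) :=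
  Algebra.TensorProduct.map (AlgHom.id ℂ (MatC n))
    (Algebra.TensorProduct.includeLeft : MatC n →ₐ[ℂ] MatC n ⊗[ℂ] MatC n)

/-- `r = Σ aᵢ ⊗ bᵢ ↦ r¹³ = Σ aᵢ ⊗ 1 ⊗ bᵢ` in `Mat_n(ℂ)^{⊗3}`. -/
noncomputable def leg13 (n : ℕ) :
    (MatC n ⊗[ℂ] MatC n) →ₐ[ℂ] (MatC n ⊗[ℂ] (MatC n ⊗[ℂ] MatC n)) :=
  Algebra.TensorProduct.map (AlgHom.id ℂ (MatC n))
    (Algebra.TensorProduct.includeRight : MatC n →ₐ[ℂ] MatC n ⊗[ℂ] MatC n)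

/-- `r = Σ aᵢ ⊗ bᵢ ↦ r²³ = Σ 1 ⊗ aᵢ ⊗ bᵢ` in `Mat_n(ℂ)^{⊗3}`. -/
noncomputable def leg23 (n : ℕ) :
    (MatC n ⊗[ℂ] MatC n) →ₐ[ℂ] (MatC n ⊗[ℂ] (MatC n ⊗[ℂ] MatC n)) :=
  Algebra.TensorProduct.includeRight

/-- The flip `τ(a ⊗ b) = b ⊗ a` of `Mat_n(ℂ) ⊗ Mat_n(ℂ)`. -/
noncomputable def tflip (n : ℕ) : (MatC n ⊗[ℂ] MatC n) ≃ₐ[ℂ] (MatC n ⊗[ℂ] MatC n) :=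
  Algebra.TensorProduct.comm ℂ (MatC n) (MatC n)

lemma nmn (n : ℕ) (x y : MatC n ⊗[ℂ] (MatC n ⊗[ℂ] MatC n)) :
    (-x) * (-y) = x * y := by
  rw [← neg_one_smul ℂ x, ← neg_one_smul ℂ y, smul_mul_assoc, mul_smul_comm, smul_smul]
  norm_num

/-- Permutation of the outer tensor legs: `a ⊗ (b ⊗ c) ↦ c ⊗ (b ⊗ a)`. -/
noncomputable def P13 (n : ℕ) :
    (MatC n ⊗[ℂ] (MatC n ⊗[ℂ] MatC n)) ≃ₐ[ℂ] (MatC n ⊗[ℂ] (MatC n ⊗[ℂ] MatC n)) :=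
  (Algebra.TensorProduct.congr AlgEquiv.refl
      (Algebra.TensorProduct.comm ℂ (MatC n) (MatC n))).trans <|
    ((Algebra.TensorProduct.assoc ℂ ℂ ℂ (MatC n) (MatC n) (MatC n)).symm).trans <|
      (Algebra.TensorProduct.congr
          (Algebra.TensorProduct.comm ℂ (MatC n) (MatC n)) AlgEquiv.refl).trans <|
        (Algebra.TensorProduct.assoc ℂ ℂ ℂ (MatC n) (MatC n) (MatC n)).trans <|
          Algebra.TensorProduct.congr AlgEquiv.refl
            (Algebra.TensorProduct.comm ℂ (MatC n) (MatC n))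

lemma P13_tmul (n : ℕ) (a b c : MatC n) :
    P13 n (a ⊗ₜ[ℂ] (b ⊗ₜ[ℂ] c)) = c ⊗ₜ[ℂ] (b ⊗ₜ[ℂ] a) := by
  simp [P13, Algebra.TensorProduct.congr_apply, Algebra.TensorProduct.assoc_tmul,
    Algebra.TensorProduct.comm_tmul]

lemma P13_leg12 (n : ℕ) (x : MatC n ⊗[ℂ] MatC n) :
    P13 n (leg12 n x) = leg23 n (tflip n x) := by
  induction x using TensorProduct.induction_on with
  | zero => rw [map_zero (leg12 n), map_zero (P13 n), map_zero (tflip n), map_zero (leg23 n)]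
  | tmul a b =>
      simp only [leg12, leg23, tflip, Algebra.TensorProduct.map_tmul,
        Algebra.TensorProduct.includeLeft_apply, Algebra.TensorProduct.includeRight_apply,
        Algebra.TensorProduct.comm_tmul, AlgHom.coe_id, id_eq, P13_tmul]
  | add x y hx hy =>
      rw [map_add (leg12 n), map_add (P13 n), hx, hy, map_add (tflip n), map_add (leg23 n)]

lemma P13_leg23 (n : ℕ) (x : MatC n ⊗[ℂ] MatC n) :
    P13 n (leg23 n x) = leg12 n (tflip n x) := by
  induction x using TensorProduct.induction_on with
  | zero => rw [map_zero (leg23 n), map_zero (P13 n), map_zero (tflip n), map_zero (leg12 n)]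
  | tmul a b =>
      simp only [leg12, leg23, tflip, Algebra.TensorProduct.map_tmul,
        Algebra.TensorProduct.includeLeft_apply, Algebra.TensorProduct.includeRight_apply,
        Algebra.TensorProduct.comm_tmul, AlgHom.coe_id, id_eq, P13_tmul]
  | add x y hx hy =>
      rw [map_add (leg23 n), map_add (P13 n), hx, hy, map_add (tflip n), map_add (leg12 n)]

lemma P13_leg13 (n : ℕ) (x : MatC n ⊗[ℂ] MatC n) :
    P13 n (leg13 n x) = leg13 n (tflip n x) := by
  induction x using TensorProduct.induction_on with
  | zero => rw [map_zero (leg13 n), map_zero (P13 n), map_zero (tflip n), map_zero (leg13 n)]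
  | tmul a b =>
      simp only [leg13, tflip, Algebra.TensorProduct.map_tmul,
        Algebra.TensorProduct.includeRight_apply,
        Algebra.TensorProduct.comm_tmul, AlgHom.coe_id, id_eq, P13_tmul]
  | add x y hx hy =>
      rw [map_add (leg13 n), map_add (P13 n), hx, hy, map_add (tflip n), map_add (leg13 n)]


lemma leg_neg (n : ℕ)
    (f : (MatC n ⊗[ℂ] MatC n) →ₐ[ℂ] (MatC n ⊗[ℂ] (MatC n ⊗[ℂ] MatC n)))
    (x : MatC n ⊗[ℂ] MatC n) : f (-x) = - f x := by
  rw [← neg_one_smul ℂ x, map_smul f]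
  exact neg_one_smul ℂ (f x)

/-- a unitary solution of the associative Yang–Baxter equation (in the
form with one "vector bundle" spectral parameter) satisfies the commutator identity
leading to the classical Yang–Baxter equation. -/
theorem unitary_AYBE_implies_commutator_identity (n : ℕ) (hn : 1 ≤ n)
    (r : ℂ → ℂ → ℂ → MatC n ⊗[ℂ] MatC n)
    (hAYBE : ∀ u v y₁ y₂ y₃ : ℂ,
      leg12 n (r u y₁ y₂) * leg23 n (r (u + v) y₂ y₃) =
        leg13 n (r (u + v) y₁ y₃) * leg12 n (r (-v) y₁ y₂) +
          leg23 n (r v y₂ y₃) * leg13 n (r u y₁ y₃))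
    (hunit : ∀ v y₁ y₂ : ℂ, r v y₁ y₂ = - tflip n (r (-v) y₂ y₁)) :
    ∀ u v y₁ y₂ y₃ : ℂ,
      (leg12 n (r (-v) y₁ y₂) * leg13 n (r (u + v) y₁ y₃) -
          leg13 n (r (u + v) y₁ y₃) * leg12 n (r (-v) y₁ y₂)) +
        (leg12 n (r u y₁ y₂) * leg23 n (r (u + v) y₂ y₃) -
          leg23 n (r (u + v) y₂ y₃) * leg12 n (r u y₁ y₂)) +
        (leg13 n (r u y₁ y₃) * leg23 n (r v y₂ y₃) -
          leg23 n (r v y₂ y₃) * leg13 n (r u y₁ y₃)) = 0 := by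
  intro u v y₁ y₂ y₃
  have htf : ∀ x a b : ℂ, tflip n (r x a b) = - r (-x) b a := by
    intro x a b
    have h := hunit (-x) b a
    rw [neg_neg] at h
    rw [h, neg_neg]
  -- The key identity: apply P13 to the AYBE at (-(u+v), v, y₃, y₂, y₁) and use unitarity.
  have key : leg23 n (r (u + v) y₂ y₃) * leg12 n (r u y₁ y₂) =
      leg13 n (r u y₁ y₃) * leg23 n (r v y₂ y₃) +
        leg12 n (r (-v) y₁ y₂) * leg13 n (r (u + v) y₁ y₃) := by
    have hA := hAYBE (-(u + v)) v y₃ y₂ y₁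
    have e1 : -(u + v) + v = -u := by ring
    rw [e1] at hA
    have hP := congrArg (P13 n) hA
    rw [map_mul (P13 n), map_add (P13 n), map_mul (P13 n), map_mul (P13 n)] at hP
    simp only [P13_leg12, P13_leg23, P13_leg13] at hP
    simp only [htf, neg_neg] at hP
    simp only [leg_neg] at hP
    rw [nmn, nmn, nmn] at hP
    exact hP
  rw [hAYBE u v y₁ y₂ y₃, key]
  abel
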